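/- (DFA condition) For any DFA 𝒜 = (Q, A, δ, q⁰, F) with finitely many states over a nonempty finite alphabet A, the sequence μ_n(L(𝒜)) fails to converge to 0 if and only if there exists a state q ∈ F such that Reachable(q⁰, q) holds and for every state q' ∈ Q, Reachable(q, q') implies Reachable(q', q). -/

import Mathlib

set_option linter.unusedSectionVars false
set_option linter.unnecessarySimpa false

open Filter

/-- `mu L n` is the probability that a uniformly random string of length `n` lies in `L`. -/
noncomputable def mu {A : Type*} [Fintype A] (L : Set (List A)) (n : ℕ) : ℝ :=
  (Nat.card {s : List A // s.length = n ∧ s ∈ L} : ℝ) / (Fintype.card A : ℝ) ^ n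

/-- Symmetric difference of two languages. -/
def sdiffL {A : Type*} (L₁ L₂ : Set (List A)) : Set (List A) := (L₁ \ L₂) ∪ (L₂ \ L₁)

/-- `L₁ ≃_p L₂` : the probability of the symmetric difference tends to `0`. -/
def pEquiv {A : Type*} [Fintype A] (L₁ L₂ : Set (List A)) : Prop :=
  Filter.Tendsto (mu (sdiffL L₁ L₂)) Filter.atTop (nhds 0)

/-- `Reachable M q q'` : there is a string driving `M` from state `q` to state `q'`. -/
def Reachable {A σ : Type*} (M : DFA A σ) (q q' : σ) : Prop :=
  ∃ s : List A, M.evalFrom q s = q'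

/-- The language accepted by the DFA `M`. -/
def langOf {A σ : Type*} (M : DFA A σ) : Set (List A) := {s : List A | M.eval s ∈ M.accept}

section Aux

open Mathlib

variable {A σ : Type*} [Fintype A] [Nonempty A] [Fintype σ] (M : DFA A σ)

/-- number of length-`n` strings driving `M` from `q` to a state satisfying `P`. -/
noncomputable def cnt (P : σ → Prop) (n : ℕ) (q : σ) : ℕ :=
  Nat.card {v : List.Vector A n // P (M.evalFrom q v.toList)}

lemma reach_refl (q : σ) : Reachable M q q := ⟨[], rfl⟩

lemma reach_trans {q q' q'' : σ} (h : Reachable M q q') (h' : Reachable M q' q'') :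
    Reachable M q q'' := by
  obtain ⟨s, hs⟩ := h; obtain ⟨t, ht⟩ := h'
  exact ⟨s ++ t, by rw [M.evalFrom_of_append, hs, ht]⟩

lemma cnt_le (P : σ → Prop) (n : ℕ) (q : σ) : cnt M P n q ≤ Fintype.card A ^ n := by
  have h := Nat.card_le_card_of_injective
    (fun x : {v : List.Vector A n // P (M.evalFrom q v.toList)} => x.1) Subtype.val_injective
  simpa [cnt, Nat.card_eq_fintype_card, card_vector] using h

/-- peel off the first letter -/
def consEquiv (P : σ → Prop) (n : ℕ) (q : σ) :
    {v : List.Vector A (n+1) // P (M.evalFrom q v.toList)} ≃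
      Σ a : A, {v : List.Vector A n // P (M.evalFrom (M.step q a) v.toList)} where
  toFun x := ⟨x.1.head, x.1.tail, by
    have h := x.2
    rw [← List.Vector.cons_head_tail x.1, List.Vector.toList_cons] at h
    exact h⟩
  invFun y := ⟨y.1 ::ᵥ y.2.1, by rw [List.Vector.toList_cons]; exact y.2.2⟩
  left_inv x := Subtype.ext (List.Vector.cons_head_tail x.1)
  right_inv y := by
    rcases y with ⟨a, v, h⟩
    exact Sigma.subtype_ext (List.Vector.head_cons a v) (List.Vector.tail_cons a v)

lemma cnt_succ (P : σ → Prop) (n : ℕ) (q : σ) :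
    cnt M P (n+1) q = ∑ a : A, cnt M P n (M.step q a) := by
  classical
  rw [cnt, Nat.card_congr (consEquiv M P n q), Nat.card_eq_fintype_card, Fintype.card_sigma]
  refine Finset.sum_congr rfl fun a _ => ?_
  rw [cnt, Nat.card_eq_fintype_card]

/-- `q` is transient -/
def Tr (q : σ) : Prop := ∃ q', Reachable M q q' ∧ ¬ Reachable M q' q

lemma notTr_forward {q : σ} (h : ¬ Tr M q) (s : List A) : ¬ Tr M (M.evalFrom q s) := by
  rintro ⟨q', h1, h2⟩
  exact h ⟨q', reach_trans M ⟨s, rfl⟩ h1, fun h3 => h2 (reach_trans M h3 ⟨s, rfl⟩)⟩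

lemma exists_bottom (q : σ) : ∃ b, Reachable M q b ∧ ¬ Tr M b := by
  classical
  obtain ⟨b, hb, hmin⟩ := Finset.exists_min_image
    (Finset.univ.filter (fun x => Reachable M q x))
    (fun x => Set.ncard {y | Reachable M x y})
    ⟨q, Finset.mem_filter.2 ⟨Finset.mem_univ _, reach_refl M q⟩⟩
  refine ⟨b, (Finset.mem_filter.1 hb).2, ?_⟩
  rintro ⟨q', hbq', hq'b⟩
  have hqq' : Reachable M q q' := reach_trans M (Finset.mem_filter.1 hb).2 hbq'
  have hsub : {y | Reachable M q' y} ⊂ {y | Reachable M b y} := by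
    constructor
    · intro y hy; exact reach_trans M hbq' hy
    · intro hcon; exact hq'b (hcon (reach_refl M b))
  have hlt := Set.ncard_lt_ncard hsub (Set.toFinite _)
  exact absurd (hmin q' (Finset.mem_filter.2 ⟨Finset.mem_univ _, hqq'⟩)) (not_le.2 hlt)

lemma cnt_Tr_eq_zero {q : σ} (h : ¬ Tr M q) (n : ℕ) : cnt M (Tr M) n q = 0 := by
  have : IsEmpty {v : List.Vector A n // Tr M (M.evalFrom q v.toList)} :=
    ⟨fun x => notTr_forward M h x.1.toList x.2⟩
  exact Nat.card_of_isEmpty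

/-- max over states of the transient count -/
noncomputable def gmax (n : ℕ) : ℕ := Finset.univ.sup (fun q : σ => cnt M (Tr M) n q)

lemma cnt_le_gmax (n : ℕ) (q : σ) : cnt M (Tr M) n q ≤ gmax M n :=
  Finset.le_sup (Finset.mem_univ q)

lemma gmax_le_pow (n : ℕ) : gmax M n ≤ Fintype.card A ^ n :=
  Finset.sup_le fun q _ => cnt_le M _ n q

lemma gmax_add (s m : ℕ) : gmax M (s + m) ≤ Fintype.card A ^ s * gmax M m := by
  induction s with
  | zero => simpa using le_rfl
  | succ s ih =>
    refine Finset.sup_le fun q _ => ?_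
    have : s + 1 + m = (s + m) + 1 := by omega
    rw [this, cnt_succ]
    calc ∑ a : A, cnt M (Tr M) (s + m) (M.step q a)
        ≤ ∑ _a : A, Fintype.card A ^ s * gmax M m := by
          refine Finset.sum_le_sum fun a _ => le_trans (cnt_le_gmax M _ _) ih
      _ = Fintype.card A ^ (s+1) * gmax M m := by
          rw [Finset.sum_const, Finset.card_univ, smul_eq_mul]; ring

lemma cnt_block {m : ℕ} : ∀ (w : List A) (q : σ), ¬ Tr M (M.evalFrom q w) →
    cnt M (Tr M) (w.length + m) q ≤ (Fintype.card A ^ w.length - 1) * gmax M m := by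
  intro w
  induction w with
  | nil =>
    intro q hq
    simp only [List.length_nil, pow_zero, Nat.sub_self, zero_mul, Nat.le_zero, Nat.zero_add]
    exact cnt_Tr_eq_zero M hq m
  | cons a w ih =>
    intro q hq
    have hlen : (a :: w).length + m = (w.length + m) + 1 := by simp; omega
    rw [hlen, cnt_succ]
    classical
    have hA1 : 1 ≤ Fintype.card A := Fintype.card_pos
    have hx1 : 1 ≤ Fintype.card A ^ w.length := Nat.one_le_pow _ _ Fintype.card_pos
    have hstep : cnt M (Tr M) (w.length + m) (M.step q a)
        ≤ (Fintype.card A ^ w.length - 1) * gmax M m := by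
      refine ih (M.step q a) ?_
      have : M.evalFrom q (a :: w) = M.evalFrom (M.step q a) w := rfl
      rwa [this] at hq
    have hother : ∀ b : A, cnt M (Tr M) (w.length + m) (M.step q b)
        ≤ Fintype.card A ^ w.length * gmax M m :=
      fun b => le_trans (cnt_le_gmax M _ _) (gmax_add M _ _)
    calc ∑ b : A, cnt M (Tr M) (w.length + m) (M.step q b)
        = cnt M (Tr M) (w.length + m) (M.step q a)
          + ∑ b ∈ Finset.univ.erase a, cnt M (Tr M) (w.length + m) (M.step q b) := by
          rw [← Finset.add_sum_erase _ _ (Finset.mem_univ a)]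
      _ ≤ (Fintype.card A ^ w.length - 1) * gmax M m
          + (Fintype.card A - 1) * (Fintype.card A ^ w.length * gmax M m) := by
          refine Nat.add_le_add hstep ?_
          calc ∑ b ∈ Finset.univ.erase a, cnt M (Tr M) (w.length + m) (M.step q b)
              ≤ ∑ _b ∈ Finset.univ.erase a, Fintype.card A ^ w.length * gmax M m :=
                Finset.sum_le_sum fun b _ => hother b
            _ = (Fintype.card A - 1) * (Fintype.card A ^ w.length * gmax M m) := by
                rw [Finset.sum_const, Finset.card_erase_of_mem (Finset.mem_univ a),
                  Finset.card_univ, smul_eq_mul]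
      _ ≤ (Fintype.card A ^ (a :: w).length - 1) * gmax M m := by
          simp only [List.length_cons]
          have key : ∀ (x c G : ℕ), 1 ≤ x → 1 ≤ c →
              (x-1)*G + (c-1)*(x*G) ≤ (c*x - 1)*G := by
            intro x c G hx hc
            obtain ⟨c', rfl⟩ := Nat.exists_eq_add_of_le hc
            have e1 : 1 + c' - 1 = c' := by omega
            rw [e1]
            have h3 : (1 + c') * x = x + c' * x := by ring
            have h2 : (x - 1) + c' * x = (1 + c') * x - 1 := by omega
            have h4 : (x-1)*G + c'*(x*G) = ((x-1) + c'*x)*G := by ring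
            rw [h4, h2]
          have hpow : Fintype.card A ^ (w.length+1)
              = Fintype.card A * Fintype.card A ^ w.length := by ring
          rw [hpow]
          exact key _ _ _ hx1 hA1

lemma gmax_decay {K : ℕ} (W : σ → List A) (hWlen : ∀ q, (W q).length = K)
    (hW : ∀ q, ¬ Tr M (M.evalFrom q (W q))) :
    ∀ (j r : ℕ), gmax M (K * j + r) ≤ (Fintype.card A ^ K - 1) ^ j * Fintype.card A ^ r := by
  intro j
  induction j with
  | zero => intro r; simpa using gmax_le_pow M r
  | succ j ih =>
    intro r
    have harith : K * (j+1) + r = K + (K * j + r) := by ring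
    rw [harith]
    refine Finset.sup_le fun q _ => ?_
    have h1 := cnt_block (M := M) (m := K * j + r) (W q) q (hW q)
    rw [hWlen q] at h1
    calc cnt M (Tr M) (K + (K*j+r)) q ≤ (Fintype.card A ^ K - 1) * gmax M (K*j+r) := h1
      _ ≤ (Fintype.card A ^ K - 1) * ((Fintype.card A ^ K - 1)^j * Fintype.card A ^ r) :=
          Nat.mul_le_mul_left _ (ih r)
      _ = (Fintype.card A ^ K - 1)^(j+1) * Fintype.card A ^ r := by ring

lemma exists_W : ∃ (K : ℕ) (W : σ → List A), 1 ≤ K ∧ (∀ q, (W q).length = K) ∧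
    ∀ q, ¬ Tr M (M.evalFrom q (W q)) := by
  classical
  have h : ∀ q : σ, ∃ s : List A, ¬ Tr M (M.evalFrom q s) := by
    intro q
    obtain ⟨b, ⟨s, hs⟩, hb⟩ := exists_bottom M q
    exact ⟨s, by rwa [hs]⟩
  choose w0 hw0 using h
  set K := Finset.univ.sup (fun q : σ => (w0 q).length) + 1 with hK
  have a0 : A := Classical.arbitrary A
  have hle : ∀ q : σ, (w0 q).length ≤ K := fun q => by
    have h : (w0 q).length ≤ Finset.univ.sup (fun q : σ => (w0 q).length) :=
      Finset.le_sup (f := fun q : σ => (w0 q).length) (Finset.mem_univ q)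
    omega
  refine ⟨K, fun q => w0 q ++ List.replicate (K - (w0 q).length) a0,
    Nat.le_add_left 1 _, fun q => ?_, fun q => ?_⟩
  · have := hle q
    simp [List.length_append, List.length_replicate]
    omega
  · rw [M.evalFrom_of_append]
    exact notTr_forward M (hw0 q) _

lemma mu_eq_cnt (n : ℕ) :
    mu (langOf M) n = (cnt M (· ∈ M.accept) n M.start : ℝ) / (Fintype.card A : ℝ) ^ n := by
  have e : {s : List A // s.length = n ∧ s ∈ langOf M} ≃
      {v : List.Vector A n // M.evalFrom M.start v.toList ∈ M.accept} :=
    { toFun := fun x => ⟨⟨x.1, x.2.1⟩, x.2.2⟩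
      invFun := fun v => ⟨v.1.1, v.1.2, v.2⟩
      left_inv := fun x => rfl
      right_inv := fun v => rfl }
  rw [mu, cnt, Nat.card_congr e]

lemma cnt_prepend (s₀ : List A) (n : ℕ) (q : σ) (hs₀ : M.evalFrom M.start s₀ = q) :
    cnt M (· ∈ M.accept) n q ≤ cnt M (· ∈ M.accept) (s₀.length + n) M.start := by
  refine Nat.card_le_card_of_injective (fun x => ⟨⟨s₀ ++ x.1.toList, by
    simp [List.Vector.toList_length]⟩, by
    show M.evalFrom M.start (s₀ ++ x.1.toList) ∈ M.accept
    rw [M.evalFrom_of_append, hs₀]; exact x.2⟩) ?_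
  intro x y h
  have h1 : s₀ ++ x.1.toList = s₀ ++ y.1.toList := congrArg (fun z => z.1.toList) h
  have h2 := List.append_cancel_left h1
  exact Subtype.ext (List.Vector.toList_injective h2)

lemma cnt_acc_le_Tr (h : ∀ qf, qf ∈ M.accept → Reachable M M.start qf → Tr M qf) (n : ℕ) :
    cnt M (· ∈ M.accept) n M.start ≤ cnt M (Tr M) n M.start := by
  refine Nat.card_le_card_of_injective
    (fun x => ⟨x.1, h _ x.2 ⟨x.1.toList, rfl⟩⟩) ?_
  intro x y hxy
  have h2 := congrArg Subtype.val hxy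
  exact Subtype.ext h2

lemma lower_bound (q : σ) (hq : q ∈ M.accept)
    (hbot : ∀ q', Reachable M q q' → Reachable M q' q) :
    ∃ B : ℕ, 1 ≤ B ∧ ∀ n : ℕ, ∃ ℓ, ℓ < B ∧
      Fintype.card A ^ n ≤ B * cnt M (· ∈ M.accept) (n + ℓ) q := by
  classical
  have hr : ∀ q' : σ, ∃ u : List A, Reachable M q q' → M.evalFrom q' u = q := by
    intro q'
    by_cases h : Reachable M q q'
    · obtain ⟨u, hu⟩ := hbot q' h
      exact ⟨u, fun _ => hu⟩
    · exact ⟨[], fun h' => absurd h' h⟩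
  choose u hu using hr
  set B := Finset.univ.sup (fun q' : σ => (u q').length) + 1 with hB
  refine ⟨B, Nat.le_add_left 1 _, fun n => ?_⟩
  set f : List.Vector A n →
      Σ ℓ : Fin B, {v : List.Vector A (n + ℓ) // M.evalFrom q v.toList ∈ M.accept} :=
    fun v => ⟨⟨(u (M.evalFrom q v.toList)).length, by
        have h : (u (M.evalFrom q v.toList)).length
            ≤ Finset.univ.sup (fun q' : σ => (u q').length) :=
          Finset.le_sup (f := fun q' : σ => (u q').length)
            (Finset.mem_univ (M.evalFrom q v.toList))
        omega⟩,
      ⟨⟨v.toList ++ u (M.evalFrom q v.toList), by simp [List.Vector.toList_length]⟩, by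
        show M.evalFrom q (v.toList ++ u _) ∈ M.accept
        rw [M.evalFrom_of_append, hu _ ⟨v.toList, rfl⟩]
        exact hq⟩⟩ with hf
  have hinj : Function.Injective f := by
    have hcomp : Function.Injective
        ((fun x : Σ ℓ : Fin B,
            {v : List.Vector A (n + ℓ) // M.evalFrom q v.toList ∈ M.accept} =>
          x.2.1.toList) ∘ f) := by
      intro v v' h
      simp only [Function.comp, hf] at h
      have h2 := List.append_inj_left h (by simp [List.Vector.toList_length])
      exact List.Vector.toList_injective h2
    exact Function.Injective.of_comp hcomp
  have hcard := Nat.card_le_card_of_injective f hinj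
  rw [Nat.card_eq_fintype_card (α := List.Vector A n), card_vector] at hcard
  have hsig : Nat.card (Σ ℓ : Fin B,
      {v : List.Vector A (n + ℓ) // M.evalFrom q v.toList ∈ M.accept})
      = ∑ ℓ : Fin B, cnt M (· ∈ M.accept) (n + ℓ) q := by
    rw [Nat.card_eq_fintype_card, Fintype.card_sigma]
    refine Finset.sum_congr rfl fun ℓ _ => ?_
    rw [cnt, Nat.card_eq_fintype_card]
  obtain ⟨ℓ₀, _, hmax⟩ := Finset.exists_max_image Finset.univ
      (fun ℓ : Fin B => cnt M (· ∈ M.accept) (n + ℓ) q) ⟨⟨0, by omega⟩, Finset.mem_univ _⟩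
  refine ⟨ℓ₀, ℓ₀.2, ?_⟩
  calc Fintype.card A ^ n
      ≤ ∑ ℓ : Fin B, cnt M (· ∈ M.accept) (n + ℓ) q := by rw [← hsig]; exact hcard
    _ ≤ ∑ _ℓ : Fin B, cnt M (· ∈ M.accept) (n + ℓ₀) q :=
        Finset.sum_le_sum fun ℓ _ => hmax ℓ (Finset.mem_univ _)
    _ = B * cnt M (· ∈ M.accept) (n + ℓ₀) q := by
        rw [Finset.sum_const, Finset.card_univ, Fintype.card_fin, smul_eq_mul]

end Aux

theorem dfa_condition {A σ : Type*} [Fintype A] [Nonempty A] [Fintype σ] (M : DFA A σ) :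
    ¬ Filter.Tendsto (mu (langOf M)) Filter.atTop (nhds 0) ↔
      ∃ q ∈ M.accept, Reachable M M.start q ∧
        ∀ q' : σ, Reachable M q q' → Reachable M q' q := by
  constructor
  · intro hnot
    by_contra hn
    apply hnot
    push_neg at hn
    have hTr : ∀ qf, qf ∈ M.accept → Reachable M M.start qf → Tr M qf := by
      intro qf h1 h2
      obtain ⟨q', hq1, hq2⟩ := hn qf h1 h2
      exact ⟨q', hq1, hq2⟩
    obtain ⟨K, W, hK1, hWlen, hW⟩ := exists_W M
    set aK := Fintype.card A ^ K with haK
    have haK1 : 1 ≤ aK := Nat.one_le_pow _ _ Fintype.card_pos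
    have hA0 : (0:ℝ) < (aK : ℝ) := by exact_mod_cast haK1
    set θ : ℝ := ((aK - 1 : ℕ) : ℝ) / (aK : ℝ) with hθ
    have hθ0 : 0 ≤ θ := by positivity
    have hθ1 : θ < 1 := by
      rw [hθ, div_lt_one hA0]
      exact_mod_cast Nat.sub_lt (by omega) one_pos
    have hbound : ∀ n, mu (langOf M) n ≤ θ ^ (n / K) := by
      intro n
      set j := n / K with hj
      set r := n % K with hr
      have hn' : n = K * j + r := (Nat.div_add_mod n K).symm
      have h1 : cnt M (· ∈ M.accept) n M.start ≤ gmax M n :=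
        le_trans (cnt_acc_le_Tr M hTr n) (cnt_le_gmax M n M.start)
      have h2 : gmax M n ≤ (aK - 1) ^ j * Fintype.card A ^ r := by
        conv_lhs => rw [hn']
        exact gmax_decay M W hWlen hW j r
      have hpow : Fintype.card A ^ n = aK ^ j * Fintype.card A ^ r := by
        conv_lhs => rw [hn']
        rw [pow_add, pow_mul]
      have h3 : cnt M (· ∈ M.accept) n M.start * aK ^ j
          ≤ (aK - 1)^j * Fintype.card A ^ n := by
        calc cnt M (· ∈ M.accept) n M.start * aK ^ j
            ≤ ((aK - 1)^j * Fintype.card A ^ r) * aK ^ j :=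
              Nat.mul_le_mul_right _ (le_trans h1 h2)
          _ = (aK - 1)^j * Fintype.card A ^ n := by rw [hpow]; ring
      have hAn : (0:ℝ) < (Fintype.card A : ℝ) ^ n := by
        have : (0:ℝ) < (Fintype.card A : ℝ) := by exact_mod_cast Fintype.card_pos
        positivity
      rw [mu_eq_cnt, div_le_iff₀ hAn, hθ, div_pow, div_mul_eq_mul_div,
        le_div_iff₀ (by positivity)]
      calc (cnt M (· ∈ M.accept) n M.start : ℝ) * (aK:ℝ)^j
          ≤ ((aK - 1 : ℕ):ℝ)^j * (Fintype.card A : ℝ) ^ n := by exact_mod_cast h3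
        _ = ((aK - 1 : ℕ):ℝ)^j * (Fintype.card A : ℝ) ^ n := rfl
    have hdiv : Filter.Tendsto (fun n : ℕ => n / K) atTop atTop :=
      Filter.tendsto_atTop_atTop.2 fun b => ⟨K*b, fun n h =>
        (Nat.le_div_iff_mul_le (by omega)).2 (by rw [Nat.mul_comm]; exact h)⟩
    have h0 : ∀ n, 0 ≤ mu (langOf M) n := by
      intro n
      rw [mu]
      positivity
    exact squeeze_zero h0 hbound
      ((tendsto_pow_atTop_nhds_zero_of_lt_one hθ0 hθ1).comp hdiv)
  · rintro ⟨q, hacc, ⟨s₀, hs₀⟩, hbot⟩ htend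
    obtain ⟨B, hB1, hlb⟩ := lower_bound M q hacc hbot
    have hA0 : (0:ℝ) < (Fintype.card A : ℝ) := by exact_mod_cast Fintype.card_pos
    have hB0 : (0:ℝ) < (B : ℝ) := by exact_mod_cast hB1
    set c : ℝ := 1 / ((B:ℝ) * (Fintype.card A:ℝ) ^ (s₀.length + B)) with hc
    have hc0 : 0 < c := by rw [hc]; positivity
    have hfreq : ∀ m : ℕ, ∃ N, m ≤ N ∧ c ≤ mu (langOf M) N := by
      intro m
      obtain ⟨ℓ, hℓB, hcount⟩ := hlb m
      refine ⟨s₀.length + (m + ℓ), by omega, ?_⟩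
      set N := s₀.length + (m + ℓ) with hN
      have hpre := cnt_prepend M s₀ (m + ℓ) q hs₀
      have h1 : Fintype.card A ^ m ≤ B * cnt M (· ∈ M.accept) N M.start :=
        le_trans hcount (Nat.mul_le_mul_left _ hpre)
      have h3 : Fintype.card A ^ N
          ≤ cnt M (· ∈ M.accept) N M.start * (B * Fintype.card A ^ (s₀.length + B)) := by
        calc Fintype.card A ^ N
            ≤ Fintype.card A ^ (m + (s₀.length + B)) :=
              Nat.pow_le_pow_right Fintype.card_pos (by omega)
          _ = Fintype.card A ^ m * Fintype.card A ^ (s₀.length + B) := by rw [pow_add]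
          _ ≤ (B * cnt M (· ∈ M.accept) N M.start) * Fintype.card A ^ (s₀.length + B) :=
              Nat.mul_le_mul_right _ h1
          _ = cnt M (· ∈ M.accept) N M.start * (B * Fintype.card A ^ (s₀.length + B)) := by
              ring
      rw [mu_eq_cnt, hc, div_le_div_iff₀ (by positivity) (by positivity)]
      calc (1:ℝ) * (Fintype.card A:ℝ)^N = ((Fintype.card A ^ N : ℕ) : ℝ) := by
            rw [one_mul]; push_cast; ring
        _ ≤ _ := by exact_mod_cast h3
    have hev := htend (Iio_mem_nhds hc0)
    rw [Filter.mem_map, Filter.mem_atTop_sets] at hev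
    obtain ⟨m, hm⟩ := hev
    obtain ⟨N, hNm, hcN⟩ := hfreq m
    exact absurd (Set.mem_Iio.1 (hm N hNm)) (not_lt.2 hcN)
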